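/- (Second exchange lemma) Let A be a coherent commutative ring, E a finitely presented A-module, and (b₁, …, bₘ) an E-regular sequence contained in the Jacobson radical Rad(A). Then every permutation of (b₁, …, bₘ) is also an E-regular sequence. -/

import Mathlib

/-- A commutative ring is coherent when kernels of linear forms on `Aⁿ` are
finitely generated (equivalently, finitely generated ideals are finitely presented). -/
def IsCoherentRing (A : Type*) [CommRing A] : Prop :=
  ∀ (n : ℕ) (f : (Fin n → A) →ₗ[A] A), (LinearMap.ker f).FG

/-- `(b₁, …, bₙ)` is an `E`-regular sequence: each `bᵢ` is regular on
`E/(b₁E + ⋯ + b_{i-1}E)`. -/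
def IsRegSeqOn (A : Type*) [CommRing A] (E : Type*) [AddCommGroup E] [Module A E]
    {n : ℕ} (b : Fin n → A) : Prop :=
  ∀ i : Fin n, ∀ x : E,
    b i • x ∈ Ideal.span (b '' {j | j < i}) • (⊤ : Submodule A E) →
    x ∈ Ideal.span (b '' {j | j < i}) • (⊤ : Submodule A E)

section Aux

variable {A : Type*} [CommRing A]

/-- Over a coherent ring, kernels of maps between finite free modules are f.g. -/
lemma aux_kerPiFG (hcoh : IsCoherentRing A) :
    ∀ (k n : ℕ) (f : (Fin n → A) →ₗ[A] (Fin k → A)), (LinearMap.ker f).FG := by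
  intro k
  induction k with
  | zero =>
    intro n f
    have h : LinearMap.ker f = ⊤ := by
      ext x
      simp only [LinearMap.mem_ker, Submodule.mem_top, iff_true]
      exact Subsingleton.elim _ _
    rw [h]
    exact Module.Finite.fg_top
  | succ k ih =>
    intro n f
    set g : (Fin n → A) →ₗ[A] A := (LinearMap.proj (0 : Fin (k+1))).comp f with hg
    set h : (Fin n → A) →ₗ[A] (Fin k → A) := (LinearMap.funLeft A A Fin.succ).comp f with hh
    have hsplit : ∀ x, f x = 0 ↔ g x = 0 ∧ h x = 0 := by
      intro x
      constructor
      · intro hx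
        constructor
        · simp [hg, hx]
        · simp [hh, hx]
      · rintro ⟨h1, h2⟩
        funext i
        refine Fin.cases ?_ ?_ i
        · exact h1
        · intro j
          exact congrFun h2 j
    obtain ⟨r, v, hv⟩ := Submodule.fg_iff_exists_fin_generating_family.mp (hcoh n g)
    set φ := Fintype.linearCombination A v with hφdef
    have hφ : LinearMap.range φ = LinearMap.ker g := by
      rw [hφdef, Fintype.range_linearCombination]; exact hv
    have key : LinearMap.ker f = Submodule.map φ (LinearMap.ker (h.comp φ)) := by
      ext x
      simp only [LinearMap.mem_ker, Submodule.mem_map]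
      constructor
      · intro hx
        obtain ⟨hgx, hhx⟩ := (hsplit x).mp hx
        have hx' : x ∈ LinearMap.range φ := by rw [hφ]; exact hgx
        obtain ⟨c, hc⟩ := hx'
        exact ⟨c, by rw [LinearMap.comp_apply, hc]; exact hhx, hc⟩
      · rintro ⟨c, hc, rfl⟩
        apply (hsplit _).mpr
        have hmem : φ c ∈ LinearMap.ker g := by rw [← hφ]; exact ⟨c, rfl⟩
        exact ⟨hmem, hc⟩
    rw [key]
    exact (ih r (h.comp φ)).map φ

/-- Over a coherent ring, the kernel of a map from a finite free module to a
finitely presented module is f.g. -/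
lemma aux_kerFPfromPi (hcoh : IsCoherentRing A) {M : Type*} [AddCommGroup M] [Module A M]
    (hM : Module.FinitePresentation A M) (n : ℕ) (f : (Fin n → A) →ₗ[A] M) :
    (LinearMap.ker f).FG := by
  haveI := hM
  obtain ⟨k, w, hw⟩ := Module.Finite.exists_fin (R := A) (M := M)
  set p := Fintype.linearCombination A w with hpdef
  have hp : Function.Surjective p := by
    rw [← LinearMap.range_eq_top, hpdef, Fintype.range_linearCombination, hw]
  have hkerp : (LinearMap.ker p).FG := Module.FinitePresentation.fg_ker p hp
  obtain ⟨l, u, hu⟩ := Submodule.fg_iff_exists_fin_generating_family.mp hkerp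
  set U := Fintype.linearCombination A u with hUdef
  have hU : LinearMap.range U = LinearMap.ker p := by
    rw [hUdef, Fintype.range_linearCombination]; exact hu
  obtain ⟨g, hg⟩ := Module.projective_lifting_property p f hp
  set L1 : (Fin (n+l) → A) →ₗ[A] (Fin n → A) := LinearMap.funLeft A A (Fin.castAdd l) with hL1
  set L2 : (Fin (n+l) → A) →ₗ[A] (Fin l → A) := LinearMap.funLeft A A (Fin.natAdd n) with hL2
  set ψ : (Fin (n+l) → A) →ₗ[A] (Fin k → A) := g.comp L1 - U.comp L2 with hψ
  have key : LinearMap.ker f = Submodule.map L1 (LinearMap.ker ψ) := by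
    ext x
    simp only [LinearMap.mem_ker, Submodule.mem_map]
    constructor
    · intro hx
      have hgx : g x ∈ LinearMap.ker p := by
        rw [LinearMap.mem_ker, ← LinearMap.comp_apply, hg]; exact hx
      rw [← hU] at hgx
      obtain ⟨y, hy⟩ := hgx
      have e1 : L1 (Fin.append x y) = x := funext fun i => Fin.append_left x y i
      have e2 : L2 (Fin.append x y) = y := funext fun i => Fin.append_right x y i
      refine ⟨Fin.append x y, ?_, e1⟩
      show ψ (Fin.append x y) = 0
      rw [hψ]
      simp only [LinearMap.sub_apply, LinearMap.comp_apply, e1, e2, hy, sub_self]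
    · rintro ⟨z, hz, rfl⟩
      have hz' : g (L1 z) - U (L2 z) = 0 := hz
      rw [sub_eq_zero] at hz'
      have hmem : g (L1 z) ∈ LinearMap.ker p := by
        rw [← hU, hz']; exact ⟨L2 z, rfl⟩
      rw [← hg, LinearMap.comp_apply]
      exact hmem
  rw [key]
  exact (aux_kerPiFG hcoh k (n+l) ψ).map L1

/-- Over a coherent ring, the kernel of a map between finitely presented modules is f.g. -/
lemma aux_kerFG (hcoh : IsCoherentRing A) {M N : Type*} [AddCommGroup M] [Module A M]
    [AddCommGroup N] [Module A N] (hM : Module.FinitePresentation A M)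
    (hN : Module.FinitePresentation A N) (f : M →ₗ[A] N) : (LinearMap.ker f).FG := by
  haveI := hM
  obtain ⟨k, p, hp⟩ := Module.Finite.exists_fin' A M
  have key : LinearMap.ker f = Submodule.map p (LinearMap.ker (f.comp p)) := by
    ext x
    constructor
    · intro hx
      obtain ⟨z, rfl⟩ := hp x
      exact ⟨z, by simpa using hx, rfl⟩
    · rintro ⟨z, hz, rfl⟩
      simpa using hz
  rw [key]
  exact (aux_kerFPfromPi hcoh hN k (f.comp p)).map p

open Pointwise in
lemma aux_fgSmul {M : Type*} [AddCommGroup M] [Module A M] {I : Ideal A} {N : Submodule A M}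
    (hI : I.FG) (hN : N.FG) : (I • N).FG := by
  obtain ⟨s, hs, hsp⟩ := Submodule.fg_def.mp hI
  obtain ⟨t, ht, htp⟩ := Submodule.fg_def.mp hN
  refine Submodule.fg_def.mpr ⟨⋃ r ∈ s, ⋃ x ∈ t, {r • x}, ?_, ?_⟩
  · exact hs.biUnion fun r _ => ht.biUnion fun x _ => Set.finite_singleton _
  · have hU : (⋃ r ∈ s, ⋃ x ∈ t, {r • x}) = s • t := by
      ext y
      simp only [Set.mem_iUnion, Set.mem_singleton_iff, exists_prop, Set.mem_smul]
      constructor <;> rintro ⟨r, hr, x, hx, h⟩ <;> exact ⟨r, hr, x, hx, h.symm⟩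
    rw [hU, ← Submodule.span_smul_span]
    have h1 : Ideal.span s = I := hsp
    rw [h1, htp]

lemma aux_memSpanSingletonSmulTop {M : Type*} [AddCommGroup M] [Module A M] (a : A) (x : M) :
    x ∈ Ideal.span {a} • (⊤ : Submodule A M) ↔ ∃ y, a • y = x := by
  constructor
  · intro hx
    refine Submodule.smul_induction_on hx ?_ ?_
    · intro r hr m _
      obtain ⟨s, rfl⟩ := Ideal.mem_span_singleton.mp hr
      exact ⟨s • m, by rw [smul_smul]⟩
    · rintro m1 m2 ⟨y1, h1⟩ ⟨y2, h2⟩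
      exact ⟨y1 + y2, by rw [smul_add, h1, h2]⟩
  · rintro ⟨y, rfl⟩
    exact Submodule.smul_mem_smul (Ideal.mem_span_singleton_self a) Submodule.mem_top

lemma aux_memQuotSmul {E : Type*} [AddCommGroup E] [Module A E] (I J : Ideal A) (x : E) :
    (I • (⊤ : Submodule A E)).mkQ x ∈
      J • (⊤ : Submodule A (E ⧸ I • (⊤ : Submodule A E))) ↔
    x ∈ (I ⊔ J) • (⊤ : Submodule A E) := by
  have h1 : J • (⊤ : Submodule A (E ⧸ I • (⊤ : Submodule A E)))
      = Submodule.map (I • (⊤ : Submodule A E)).mkQ (J • (⊤ : Submodule A E)) := by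
    rw [Submodule.map_smul'', Submodule.map_top, Submodule.range_mkQ]
  rw [h1, ← Submodule.mem_comap, Submodule.comap_map_eq, Submodule.ker_mkQ,
    Submodule.sup_smul, sup_comm]

/-- Core two-element exchange on a finitely presented module. -/
lemma aux_swapCore (hcoh : IsCoherentRing A) {M : Type*} [AddCommGroup M] [Module A M]
    (hM : Module.FinitePresentation A M) {a c : A} (hrad : a ∈ (⊥ : Ideal A).jacobson)
    (ha : ∀ x : M, a • x = 0 → x = 0)
    (hc : ∀ x : M, c • x ∈ Ideal.span {a} • (⊤ : Submodule A M) →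
      x ∈ Ideal.span {a} • (⊤ : Submodule A M)) :
    (∀ x : M, c • x = 0 → x = 0) ∧
    (∀ x : M, a • x ∈ Ideal.span {c} • (⊤ : Submodule A M) →
      x ∈ Ideal.span {c} • (⊤ : Submodule A M)) := by
  constructor
  · -- c is regular on M
    set N := LinearMap.ker ((LinearMap.lsmul A M) c) with hNdef
    have hNfg : N.FG := aux_kerFG hcoh hM hM _
    have hle : N ≤ Ideal.span {a} • N := by
      intro x hx
      have hx0 : c • x = 0 := hx
      have hx1 : c • x ∈ Ideal.span {a} • (⊤ : Submodule A M) := by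
        rw [hx0]; exact zero_mem _
      obtain ⟨y, hy⟩ := (aux_memSpanSingletonSmulTop a _).mp (hc x hx1)
      have hcy : c • y = 0 := by
        apply ha
        rw [smul_comm, hy, hx0]
      have hyN : y ∈ N := hcy
      rw [← hy]
      exact Submodule.smul_mem_smul (Ideal.mem_span_singleton_self a) hyN
    have hbot : N = ⊥ := by
      refine Submodule.eq_bot_of_le_smul_of_le_jacobson_bot (Ideal.span {a}) N hNfg hle ?_
      rw [Ideal.span_le, Set.singleton_subset_iff]
      exact hrad
    intro x hx
    have : x ∈ N := hx
    rw [hbot] at this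
    exact (Submodule.mem_bot A).mp this
  · -- a is regular on M / cM
    intro x hx
    obtain ⟨y, hy⟩ := (aux_memSpanSingletonSmulTop c _).mp hx
    have hcy : c • y ∈ Ideal.span {a} • (⊤ : Submodule A M) := by
      rw [hy]
      exact (aux_memSpanSingletonSmulTop a _).mpr ⟨x, rfl⟩
    obtain ⟨z, hz⟩ := (aux_memSpanSingletonSmulTop a _).mp (hc y hcy)
    have h0 : a • (x - c • z) = 0 := by
      rw [smul_sub, smul_comm a c z, hz, hy, sub_self]
    have hxz : x - c • z = 0 := ha _ h0
    exact (aux_memSpanSingletonSmulTop c _).mpr ⟨z, (sub_eq_zero.mp hxz).symm⟩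

/-- Swapping two adjacent terms of a regular sequence in the Jacobson radical. -/
lemma aux_swapStep {E : Type*} [AddCommGroup E] [Module A E]
    (hcoh : IsCoherentRing A) (hfp : Module.FinitePresentation A E)
    {n : ℕ} (b : Fin (n+1) → A) (hrad : ∀ i, b i ∈ (⊥ : Ideal A).jacobson)
    (hreg : IsRegSeqOn A E b) (k : Fin n) :
    IsRegSeqOn A E (b ∘ Equiv.swap k.castSucc k.succ) := by
  haveI := hfp
  set p : Fin (n+1) := k.castSucc with hp
  set q : Fin (n+1) := k.succ with hq
  have hpq : (q : ℕ) = (p : ℕ) + 1 := by simp [hp, hq]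
  set σ := Equiv.swap p q with hσ
  have hfix : ∀ j : Fin (n+1), j ≠ p → j ≠ q → σ j = j :=
    fun j h1 h2 => Equiv.swap_apply_of_ne_of_ne h1 h2
  -- image facts
  have himg_le : ∀ i : Fin (n+1), (i : ℕ) ≤ (p : ℕ) →
      (b ∘ σ) '' {j | j < i} = b '' {j | j < i} := by
    intro i hi
    apply Set.image_congr
    intro j hj
    have hj' : (j : ℕ) < (i : ℕ) := hj
    have h1 : j ≠ p := Fin.ne_of_val_ne (by omega)
    have h2 : j ≠ q := Fin.ne_of_val_ne (by omega)
    simp only [Function.comp_apply, hfix j h1 h2]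
  have himg_gt : ∀ i : Fin (n+1), (q : ℕ) < (i : ℕ) →
      (b ∘ σ) '' {j | j < i} = b '' {j | j < i} := by
    intro i hi
    rw [Set.image_comp]
    have hstab : ∀ j : Fin (n+1), j < i → σ j < i := by
      intro j hj
      have hj' : (j : ℕ) < (i : ℕ) := hj
      by_cases h1 : j = p
      · show σ j < i
        rw [h1, hσ, Equiv.swap_apply_left]
        exact Fin.lt_def.mpr (by omega)
      by_cases h2 : j = q
      · show σ j < i
        rw [h2, hσ, Equiv.swap_apply_right]
        exact Fin.lt_def.mpr (by omega)
      · show σ j < i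
        rw [hfix j h1 h2]; exact hj
    have himg : σ '' {j | j < i} = {j | j < i} := by
      apply Set.Subset.antisymm
      · rintro _ ⟨j, hj, rfl⟩
        exact hstab j hj
      · intro j hj
        refine ⟨σ j, hstab j hj, ?_⟩
        rw [hσ, Equiv.swap_apply_self]
    rw [himg]
  have hSq : {j : Fin (n+1) | j < q} = insert p {j | j < p} := by
    ext j
    simp only [Set.mem_setOf_eq, Set.mem_insert_iff, Fin.lt_def, Fin.ext_iff]
    omega
  have hbσp : (b ∘ σ) p = b q := by
    simp only [Function.comp_apply, hσ, Equiv.swap_apply_left]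
  have hbσq : (b ∘ σ) q = b p := by
    simp only [Function.comp_apply, hσ, Equiv.swap_apply_right]
  have himg_q : (b ∘ σ) '' {j | j < q} = insert (b q) (b '' {j | j < p}) := by
    rw [hSq, Set.image_insert_eq, hbσp, himg_le p le_rfl]
  have hspanq : Ideal.span (b '' {j | j < q})
      = Ideal.span (b '' {j | j < p}) ⊔ Ideal.span {b p} := by
    rw [hSq, Set.image_insert_eq, Ideal.span_insert]
    exact sup_comm _ _
  -- the quotient module
  set Ip := Ideal.span (b '' {j | j < p}) with hIp
  set K := Ip • (⊤ : Submodule A E) with hK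
  have hKfg : K.FG :=
    aux_fgSmul (Submodule.fg_span ((Set.toFinite _).image b)) Module.Finite.fg_top
  have hMfp : Module.FinitePresentation A (E ⧸ K) := by
    apply Module.finitePresentation_of_surjective K.mkQ (Submodule.mkQ_surjective K)
    rwa [Submodule.ker_mkQ]
  have ha : ∀ y : E ⧸ K, b p • y = 0 → y = 0 := by
    intro y hy
    obtain ⟨x', rfl⟩ := Submodule.mkQ_surjective K y
    have h1 : K.mkQ (b p • x') = 0 := by rw [map_smul]; exact hy
    rw [Submodule.mkQ_apply, Submodule.Quotient.mk_eq_zero] at h1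
    have h2 := hreg p x' h1
    rw [Submodule.mkQ_apply, Submodule.Quotient.mk_eq_zero]
    exact h2
  have hc : ∀ y : E ⧸ K, b q • y ∈ Ideal.span {b p} • (⊤ : Submodule A (E ⧸ K)) →
      y ∈ Ideal.span {b p} • (⊤ : Submodule A (E ⧸ K)) := by
    intro y hy
    obtain ⟨x', rfl⟩ := Submodule.mkQ_surjective K y
    rw [← map_smul] at hy
    rw [hK, hIp] at hy ⊢
    rw [aux_memQuotSmul] at hy ⊢
    rw [← hspanq] at hy ⊢
    exact hreg q x' hy
  obtain ⟨sc1, sc2⟩ := aux_swapCore hcoh hMfp (hrad p) ha hc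
  intro i x
  by_cases h1 : (i : ℕ) < (p : ℕ)
  · rw [himg_le i (le_of_lt h1)]
    have hbi : (b ∘ σ) i = b i := by
      simp only [Function.comp_apply,
        hfix i (Fin.ne_of_val_ne (by omega)) (Fin.ne_of_val_ne (by omega))]
    rw [hbi]
    exact hreg i x
  by_cases h2 : (i : ℕ) = (p : ℕ)
  · obtain rfl : i = p := Fin.ext h2
    rw [himg_le p le_rfl, hbσp]
    intro hx
    have hz : b q • K.mkQ x = 0 := by
      rw [← map_smul, Submodule.mkQ_apply, Submodule.Quotient.mk_eq_zero]
      exact hx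
    have := sc1 _ hz
    rw [Submodule.mkQ_apply, Submodule.Quotient.mk_eq_zero] at this
    exact this
  by_cases h3 : (i : ℕ) = (q : ℕ)
  · obtain rfl : i = q := Fin.ext h3
    rw [himg_q, hbσq, Ideal.span_insert]
    intro hx
    have hx' : b p • x ∈ (Ip ⊔ Ideal.span {b q}) • (⊤ : Submodule A E) := by
      rw [sup_comm]; exact hx
    rw [← aux_memQuotSmul, map_smul] at hx'
    have := sc2 _ hx'
    rw [aux_memQuotSmul, sup_comm] at this
    exact this
  · -- q < i
    have hqi : (q : ℕ) < (i : ℕ) := by omega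
    rw [himg_gt i hqi]
    have hbi : (b ∘ σ) i = b i := by
      simp only [Function.comp_apply,
        hfix i (Fin.ne_of_val_ne (by omega)) (Fin.ne_of_val_ne (by omega))]
    rw [hbi]
    exact hreg i x

end Aux

/-- Second exchange lemma: over a coherent ring, an `E`-regular sequence contained in the
Jacobson radical, on a finitely presented module `E`, stays `E`-regular after any permutation. -/
theorem stmt9 {A : Type*} [CommRing A] {E : Type*} [AddCommGroup E] [Module A E]
    (hcoh : IsCoherentRing A) (hfp : Module.FinitePresentation A E)
    {m : ℕ} (b : Fin m → A) (hrad : ∀ i, b i ∈ (⊥ : Ideal A).jacobson)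
    (hreg : IsRegSeqOn A E b) (σ : Equiv.Perm (Fin m)) :
    IsRegSeqOn A E (b ∘ σ) := by
  obtain _ | n := m
  · intro i; exact i.elim0
  have key : ∀ τ : Equiv.Perm (Fin (n+1)),
      τ ∈ Submonoid.closure (Set.range fun i : Fin n ↦ Equiv.swap i.castSucc i.succ) →
      ∀ b : Fin (n+1) → A, (∀ i, b i ∈ (⊥ : Ideal A).jacobson) → IsRegSeqOn A E b →
        IsRegSeqOn A E (b ∘ τ) := by
    intro τ hτ
    induction hτ using Submonoid.closure_induction with
    | mem τ' hτ' =>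
      obtain ⟨k, rfl⟩ := hτ'
      intro b hrad hreg
      exact aux_swapStep hcoh hfp b hrad hreg k
    | one =>
      intro b _ hreg
      exact hreg
    | mul x y hx hy ihx ihy =>
      intro b hrad hreg
      have hcomp : b ∘ ⇑(x * y) = (b ∘ ⇑x) ∘ ⇑y := rfl
      rw [hcomp]
      exact ihy (b ∘ ⇑x) (fun i => hrad (x i)) (ihx b hrad hreg)
  exact key σ (by rw [Equiv.Perm.mclosure_swap_castSucc_succ]; exact Submonoid.mem_top σ)
    b hrad hreg
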